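/- For all positive integers r and n with r even, 5 * F_{3r} * (∑_{k=1}^n F_{2rk}^3) = F_{rn} * F_{rn+r} * (L_{rn} * L_{rn+r} * L_{2rn+r} - 2*L_r^2). -/

import Mathlib

open Finset

def L : ℕ → ℤ
  | 0 => 2
  | 1 => 1
  | n + 2 => L (n + 1) + L n

def F (n : ℕ) : ℤ := Nat.fib n

lemma Lrec (n : ℕ) : L (n + 2) = L (n + 1) + L n := rfl

lemma Frec (n : ℕ) : F (n + 2) = F (n + 1) + F n := by
  simp [F, Nat.fib_add_two]
  push_cast
  ring

lemma LFrel : ∀ n : ℕ, L n = 2 * F (n + 1) - F n := by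
  intro n
  induction n using Nat.twoStepInduction with
  | zero => simp [L, F]
  | one => simp [L, F]
  | more n ih2 ih1 =>
      linear_combination Lrec n + ih1 + ih2 - 2 * Frec (n+1) + Frec n

lemma addF (m n : ℕ) : 2 * F (m + n) = F m * L n + L m * F n := by
  induction n using Nat.twoStepInduction with
  | zero =>
      have e1 : L 0 = 2 := rfl
      have e2 : F 0 = 0 := by simp [F]
      rw [Nat.add_zero, e1, e2]; ring
  | one =>
      have e1 : L 1 = 1 := rfl
      have e2 : F 1 = 1 := by simp [F]
      rw [e1, e2]
      linear_combination (-1 : ℤ) * LFrel m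
  | more n ih2 ih1 =>
      rw [show m + (n + 2) = (m + n) + 2 from by omega, Frec (m + n),
        show m + n + 1 = m + (n + 1) from by omega]
      linear_combination ih1 + ih2 - F m * Lrec n - L m * Frec n

lemma addL (m n : ℕ) : 2 * L (m + n) = L m * L n + 5 * F m * F n := by
  induction n using Nat.twoStepInduction with
  | zero =>
      have e1 : L 0 = 2 := rfl
      have e2 : F 0 = 0 := by simp [F]
      rw [Nat.add_zero, e1, e2]; ring
  | one =>
      have e1 : L 1 = 1 := rfl
      have e2 : F 1 = 1 := by simp [F]
      rw [e1, e2]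
      linear_combination 2 * LFrel (m + 1) - LFrel m + 4 * Frec m
  | more n ih2 ih1 =>
      rw [show m + (n + 2) = (m + n) + 2 from by omega, Lrec (m + n),
        show m + n + 1 = m + (n + 1) from by omega]
      linear_combination ih1 + ih2 - L m * Lrec n - 5 * F m * Frec n

lemma cassini : ∀ n : ℕ, F (n + 1) ^ 2 - F (n + 1) * F n - F n ^ 2 = (-1 : ℤ) ^ n := by
  intro n
  induction n with
  | zero => simp [F]
  | succ n ih =>
      rw [Frec n, show ((-1 : ℤ)) ^ (n + 1) = -(-1) ^ n from by rw [pow_succ]; ring]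
      linear_combination (-1 : ℤ) * ih

lemma normL (n : ℕ) (h : Even n) : L n ^ 2 = 5 * F n ^ 2 + 4 := by
  have h1 := LFrel n
  have h2 := cassini n
  rw [h.neg_one_pow] at h2
  rw [h1]
  nlinarith [h2]

lemma Fdouble (m : ℕ) : F (2 * m) = F m * L m := by
  have := addF m m
  rw [show 2 * m = m + m from by ring]
  linarith

lemma qkey (a b c d A B A2 B2 F3 Lx Ly : ℚ)
    (h1 : b ^ 2 = 5 * a ^ 2 + 4) (h2 : d ^ 2 = 5 * c ^ 2 + 4)
    (hA : 2 * A = a * d + b * c) (hB : 2 * B = b * d + 5 * a * c)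
    (hA2 : 2 * A2 = A * d + B * c) (hB2 : 2 * B2 = B * d + 5 * A * c)
    (hF3 : 4 * F3 = 3 * c * d ^ 2 + 5 * c ^ 3)
    (hLx : 2 * Lx = b * B + 5 * a * A) (hLy : 2 * Ly = B * B2 + 5 * A * A2) :
    5 * F3 * (A * B) ^ 3 = A * A2 * (B * B2 * Ly - 2 * d ^ 2) - a * A * (b * B * Lx - 2 * d ^ 2) := by
  have eA : A = (a * d + b * c) / 2 := by linarith
  subst eA
  have eB : B = (b * d + 5 * a * c) / 2 := by linarith
  subst eB
  have eA2 : A2 = (((a * d + b * c) / 2) * d + ((b * d + 5 * a * c) / 2) * c) / 2 := by linarith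
  subst eA2
  have eB2 : B2 = (((b * d + 5 * a * c) / 2) * d + 5 * ((a * d + b * c) / 2) * c) / 2 := by linarith
  subst eB2
  have eF3 : F3 = (3 * c * d ^ 2 + 5 * c ^ 3) / 4 := by linarith
  subst eF3
  have eLx : Lx = (b * ((b * d + 5 * a * c) / 2) + 5 * a * ((a * d + b * c) / 2)) / 2 := by linarith
  subst eLx
  have eLy : Ly = (((b * d + 5 * a * c) / 2) * ((((b * d + 5 * a * c) / 2) * d + 5 * ((a * d + b * c) / 2) * c) / 2) + 5 * ((a * d + b * c) / 2) * ((((a * d + b * c) / 2) * d + ((b * d + 5 * a * c) / 2) * c) / 2)) / 2 := by linarith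
  subst eLy
  linear_combination
    ((1/2)*c^2*d^3 + (-1/32)*c^2*d^7 + (5/16)*c^4*d^5 + (-25/32)*c^6*d^3 + (-1/128)*b^2*c^2*d^7 + (5/64)*b^2*c^4*d^5 + (-25/128)*b^2*c^6*d^3 + (-1/512)*b^4*c^2*d^7 + (5/256)*b^4*c^4*d^5 + (-25/512)*b^4*c^6*d^3 + (1/4)*a*b*c*d^2 + (-3/256)*a*b*c*d^8 + (25/256)*a*b*c^3*d^6 + (-25/256)*a*b*c^5*d^4 + (-125/256)*a*b*c^7*d^2 + (1/16)*a*b^3*c*d^2 + (-3/1024)*a*b^3*c*d^8 + (25/1024)*a*b^3*c^3*d^6 + (-25/1024)*a*b^3*c^5*d^4 + (-125/1024)*a*b^3*c^7*d^2 + (1/4)*a^2*d^3 + (-1/256)*a^2*d^9 + (15/4)*a^2*c^2*d + (-5/128)*a^2*c^2*d^7 + (125/128)*a^2*c^4*d^5 + (-625/128)*a^2*c^6*d^3 + (1875/256)*a^2*c^8*d + (1/16)*a^2*b^2*d^3 + (-1/1024)*a^2*b^2*d^9 + (15/16)*a^2*b^2*c^2*d + (75/512)*a^2*b^2*c^4*d^5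 + (-125/128)*a^2*b^2*c^6*d^3 + (1875/1024)*a^2*b^2*c^8*d + (25/16)*a^3*b*c*d^2 + (-15/1024)*a^3*b*c*d^8 + (25/8)*a^3*b*c^3 + (275/1024)*a^3*b*c^3*d^6 + (-1375/1024)*a^3*b*c^5*d^4 + (625/1024)*a^3*b*c^7*d^2 + (3125/512)*a^3*b*c^9 + (5/8)*a^4*d^3 + (-5/512)*a^4*d^9 + (75/8)*a^4*c^2*d + (25/512)*a^4*c^2*d^7 + (125/128)*a^4*c^4*d^5 + (-4375/512)*a^4*c^6*d^3 + (9375/512)*a^4*c^8*d) * h1 +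
    ((-1/2)*c^2*d^3 + (-1/8)*c^2*d^5 + (5/8)*c^4*d^3 + (-3/16)*a*b*c*d^4 + (-3/64)*a*b*c*d^6 + (-5/16)*a*b*c^3*d^2 + (5/32)*a*b*c^3*d^4 + (25/64)*a*b*c^5*d^2 + (-1/16)*a^2*d^5 + (-1/64)*a^2*d^7 + (-15/4)*a^2*c^2*d + (-15/8)*a^2*c^2*d^3 + (-25/64)*a^2*c^2*d^5 + (75/16)*a^2*c^4*d + (225/64)*a^2*c^4*d^3 + (-375/64)*a^2*c^6*d + (-15/8)*a^3*b*c*d^2 + (-15/32)*a^3*b*c*d^4 + (-15/128)*a^3*b*c*d^6 + (-25/8)*a^3*b*c^3 + (25/16)*a^3*b*c^3*d^2 + (125/128)*a^3*b*c^3*d^4 + (125/32)*a^3*b*c^5 + (-125/128)*a^3*b*c^5*d^2 + (-625/128)*a^3*b*c^7 + (-15/16)*a^4*d^3 + (-15/64)*a^4*d^5 + (-15/256)*a^4*d^7 + (-225/16)*a^4*c^2*d + (-75/32)*a^4*c^2*d^3 + (-75/256)*a^4*c^2*d^5 + (1125/64)*a^4*c^4*d + (1875/256)*a^4*c^4*d^3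 + (-5625/256)*a^4*c^6*d + (-75/32)*a^5*b*c*d^2 + (-75/128)*a^5*b*c*d^4 + (-75/512)*a^5*b*c*d^6 + (-125/32)*a^5*b*c^3 + (125/64)*a^5*b*c^3*d^2 + (625/512)*a^5*b*c^3*d^4 + (625/128)*a^5*b*c^5 + (-625/512)*a^5*b*c^5*d^2 + (-3125/512)*a^5*b*c^7 + (-25/32)*a^6*d^3 + (-25/128)*a^6*d^5 + (-25/512)*a^6*d^7 + (-375/32)*a^6*c^2*d + (-125/64)*a^6*c^2*d^3 + (-125/512)*a^6*c^2*d^5 + (1875/128)*a^6*c^4*d + (3125/512)*a^6*c^4*d^3 + (-9375/512)*a^6*c^6*d) * h2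

lemma qbase (c d F2 L2 F3 L3 : ℚ)
    (h2 : d ^ 2 = 5 * c ^ 2 + 4)
    (hF2 : F2 = c * d) (hL2 : 2 * L2 = d ^ 2 + 5 * c ^ 2)
    (hF3 : 2 * F3 = c * L2 + d * F2) (hL3 : 2 * L3 = d * L2 + 5 * c * F2) :
    5 * F3 * F2 ^ 3 = c * F2 * (d * L2 * L3 - 2 * d ^ 2) := by
  subst hF2
  have eL2 : L2 = (d ^ 2 + 5 * c ^ 2) / 2 := by linarith
  subst eL2
  have eF3 : F3 = (c * ((d ^ 2 + 5 * c ^ 2) / 2) + d * (c * d)) / 2 := by linarith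
  subst eF3
  have eL3 : L3 = (d * ((d ^ 2 + 5 * c ^ 2) / 2) + 5 * c * (c * d)) / 2 := by linarith
  subst eL3
  linear_combination ((-1/2)*c^2*d^3 + (-1/8)*c^2*d^5 + (5/8)*c^4*d^3) * h2

theorem stmt13 (r n : ℕ) (hr : 0 < r) (hn : 0 < n) (hre : Even r) :
    5 * F (3 * r) * ∑ k ∈ Finset.Icc 1 n, F (2 * r * k) ^ 3 =
      F (r * n) * F (r * n + r) * (L (r * n) * L (r * n + r) * L (2 * r * n + r) - 2 * L r ^ 2) := by
  -- common facts
  have hnorm_r : L r ^ 2 = 5 * F r ^ 2 + 4 := normL r hre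
  have hF3 : 4 * F (3 * r) = 3 * F r * L r ^ 2 + 5 * F r ^ 3 := by
    have h1 : 2 * F (3 * r) = F r * L (2 * r) + L r * F (2 * r) := by
      rw [show 3 * r = r + 2 * r from by ring]; exact addF r (2 * r)
    have h2 : 2 * L (2 * r) = L r * L r + 5 * F r * F r := by
      rw [show 2 * r = r + r from by ring]; exact addL r r
    have h3 := Fdouble r
    linear_combination 2 * h1 + F r * h2 + 2 * L r * h3
  induction n with
  | zero => omega
  | succ n ih =>
      rcases Nat.eq_zero_or_pos n with hn0 | hn0
      · -- base case n = 1
        subst hn0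
        simp only [Finset.Icc_self, Finset.sum_singleton]
        rw [show 2 * r * (0 + 1) + r = r + 2 * r from by ring,
          show 2 * r * 1 = 2 * r from by ring,
          show r * (0 + 1) = r from by ring,
          show r + r = 2 * r from by ring,
          show 3 * r = r + 2 * r from by ring]
        have hF2 : F (2 * r) = F r * L r := Fdouble r
        have hL2 : 2 * L (2 * r) = L r ^ 2 + 5 * F r ^ 2 := by
          have := addL r r; rw [show r + r = 2 * r from by ring] at this; linarith
        have hF3' : 2 * F (r + 2 * r) = F r * L (2 * r) + L r * F (2 * r) := addF r (2 * r)
        have hL3 : 2 * L (r + 2 * r) = L r * L (2 * r) + 5 * F r * F (2 * r) := addL r (2 * r)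
        have hq := qbase (F r : ℚ) (L r : ℚ) (F (2 * r) : ℚ) (L (2 * r) : ℚ)
          (F (r + 2 * r) : ℚ) (L (r + 2 * r) : ℚ)
          (by exact_mod_cast congrArg (Int.cast : ℤ → ℚ) hnorm_r)
          (by exact_mod_cast congrArg (Int.cast : ℤ → ℚ) hF2)
          (by exact_mod_cast congrArg (Int.cast : ℤ → ℚ) hL2)
          (by push_cast; exact_mod_cast congrArg (Int.cast : ℤ → ℚ) hF3')
          (by push_cast; exact_mod_cast congrArg (Int.cast : ℤ → ℚ) hL3)
        have : (5 * F (r + 2 * r) * F (2 * r) ^ 3 : ℚ) =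
            (F r : ℚ) * F (2 * r) * (L r * L (2 * r) * L (r + 2 * r) - 2 * L r ^ 2) := by
          push_cast
          linear_combination hq
        exact_mod_cast this
      · -- inductive step
        have ih' := ih hn0
        rw [Finset.sum_Icc_succ_top (by omega : 1 ≤ n + 1)]
        have hnormn : L (r * n) ^ 2 = 5 * F (r * n) ^ 2 + 4 :=
          normL (r * n) (hre.mul_right n)
        have hA : 2 * F (r * n + r) = F (r * n) * L r + L (r * n) * F r := addF (r * n) r
        have hB : 2 * L (r * n + r) = L (r * n) * L r + 5 * F (r * n) * F r := addL (r * n) r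
        have hA2 : 2 * F (r * n + r + r) = F (r * n + r) * L r + L (r * n + r) * F r :=
          addF (r * n + r) r
        have hB2 : 2 * L (r * n + r + r) = L (r * n + r) * L r + 5 * F (r * n + r) * F r :=
          addL (r * n + r) r
        have hLx : 2 * L (r * n + (r * n + r)) =
            L (r * n) * L (r * n + r) + 5 * F (r * n) * F (r * n + r) := addL (r * n) (r * n + r)
        have hLy : 2 * L ((r * n + r) + (r * n + r + r)) =
            L (r * n + r) * L (r * n + r + r) + 5 * F (r * n + r) * F (r * n + r + r) :=
          addL (r * n + r) (r * n + r + r)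
        have hq := qkey (F (r * n) : ℚ) (L (r * n) : ℚ) (F r : ℚ) (L r : ℚ)
          (F (r * n + r) : ℚ) (L (r * n + r) : ℚ)
          (F (r * n + r + r) : ℚ) (L (r * n + r + r) : ℚ)
          (F (3 * r) : ℚ) (L (r * n + (r * n + r)) : ℚ)
          (L ((r * n + r) + (r * n + r + r)) : ℚ)
          (by exact_mod_cast congrArg (Int.cast : ℤ → ℚ) hnormn)
          (by exact_mod_cast congrArg (Int.cast : ℤ → ℚ) hnorm_r)
          (by exact_mod_cast congrArg (Int.cast : ℤ → ℚ) hA)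
          (by exact_mod_cast congrArg (Int.cast : ℤ → ℚ) hB)
          (by exact_mod_cast congrArg (Int.cast : ℤ → ℚ) hA2)
          (by exact_mod_cast congrArg (Int.cast : ℤ → ℚ) hB2)
          (by push_cast; exact_mod_cast congrArg (Int.cast : ℤ → ℚ) hF3)
          (by exact_mod_cast congrArg (Int.cast : ℤ → ℚ) hLx)
          (by exact_mod_cast congrArg (Int.cast : ℤ → ℚ) hLy)
        have hZ : 5 * F (3 * r) * (F (r * n + r) * L (r * n + r)) ^ 3 =
            F (r * n + r) * F (r * n + r + r) *
              (L (r * n + r) * L (r * n + r + r) * L ((r * n + r) + (r * n + r + r)) - 2 * L r ^ 2) -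
            F (r * n) * F (r * n + r) *
              (L (r * n) * L (r * n + r) * L (r * n + (r * n + r)) - 2 * L r ^ 2) := by
          have : (5 * F (3 * r) * (F (r * n + r) * L (r * n + r)) ^ 3 : ℚ) =
              (F (r * n + r) : ℚ) * F (r * n + r + r) *
                (L (r * n + r) * L (r * n + r + r) * L ((r * n + r) + (r * n + r + r)) - 2 * L r ^ 2) -
              (F (r * n) : ℚ) * F (r * n + r) *
                (L (r * n) * L (r * n + r) * L (r * n + (r * n + r)) - 2 * L r ^ 2) := by
            push_cast
            linear_combination hq
          exact_mod_cast this
        rw [show 2 * r * (n + 1) + r = (r * n + r) + (r * n + r + r) from by ring,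
          show 2 * r * (n + 1) = 2 * (r * n + r) from by ring, Fdouble,
          show r * (n + 1) = r * n + r from by ring]
        rw [show 2 * r * n + r = r * n + (r * n + r) from by ring] at ih'
        linear_combination ih' + hZ
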